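/- Let k ≥ 1, let S^k be the Euclidean sphere of radius R > 0 centered at the origin in ℝ^{k+1}, and let x ∈ ℝ^{k+1} with |x| ≠ R. Define ω(x,y) = |(|x|² − |y|²)| / |x − y|² for y ∈ S^k. If α, β ∈ ℂ satisfy α + β = k, then ∫_{S^k} ω(x,y)^α dS_y = ∫_{S^k} ω(x,y)^β dS_y, where the integrals are with respect to the surface measure on S^k. -/

import Mathlib

open MeasureTheory Metric Set

noncomputable section

variable {E : Type*} [NormedAddCommGroup E] [InnerProductSpace ℝ E]

lemma eq_of_sq_eq' {a b : ℝ} (ha : 0 ≤ a) (hb : 0 ≤ b) (h : a ^ 2 = b ^ 2) : a = b := by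
  have := congrArg Real.sqrt h
  rwa [Real.sqrt_sq ha, Real.sqrt_sq hb] at this

/-- Signed inversion about `x` with (signed) power `p`. -/
def invMapO (x : E) (p : ℝ) (y : E) : E := x + (p / ‖y - x‖ ^ 2) • (y - x)

lemma invMapO_sub_center (x : E) (p : ℝ) (y : E) :
    invMapO x p y - x = (p / ‖y - x‖ ^ 2) • (y - x) := by
  simp [invMapO]

lemma norm_invMapO_sub_center (x : E) (p : ℝ) {y : E} (hy : y ≠ x) :
    ‖invMapO x p y - x‖ = |p| / ‖y - x‖ := by
  have h : ‖y - x‖ ≠ 0 := by simpa [sub_eq_zero] using hy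
  rw [invMapO_sub_center, norm_smul]
  rw [Real.norm_eq_abs, abs_div, abs_pow, abs_norm]
  field_simp

lemma dist_invMapO_center (x : E) (p : ℝ) {y : E} (hy : y ≠ x) :
    dist (invMapO x p y) x = |p| / dist y x := by
  rw [dist_eq_norm, dist_eq_norm, norm_invMapO_sub_center x p hy]

lemma norm_invMapO_sub_invMapO (x : E) (p : ℝ) {y z : E} (hy : y ≠ x) (hz : z ≠ x) :
    ‖invMapO x p y - invMapO x p z‖ = |p| * ‖y - z‖ / (‖y - x‖ * ‖z - x‖) := by
  have hu : ‖y - x‖ ≠ 0 := by simpa [sub_eq_zero] using hy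
  have hv : ‖z - x‖ ≠ 0 := by simpa [sub_eq_zero] using hz
  have e3 : ‖y - z‖ ^ 2 = ‖y - x‖ ^ 2 - 2 * inner ℝ (y - x) (z - x) + ‖z - x‖ ^ 2 := by
    have e2 : y - z = y - x - (z - x) := by abel
    rw [e2, @norm_sub_sq_real]
  refine eq_of_sq_eq' (norm_nonneg _) (by positivity) ?_
  have e1 : invMapO x p y - invMapO x p z
      = (p / ‖y - x‖ ^ 2) • (y - x) - (p / ‖z - x‖ ^ 2) • (z - x) := by
    simp only [invMapO]; abel
  rw [e1, norm_sub_sq_real, norm_smul, norm_smul,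
    real_inner_smul_left, real_inner_smul_right]
  simp only [Real.norm_eq_abs, div_pow, mul_pow, sq_abs, abs_div, abs_pow, abs_norm]
  rw [e3]
  field_simp
  ring

lemma dist_invMapO (x : E) (p : ℝ) {y z : E} (hy : y ≠ x) (hz : z ≠ x) :
    dist (invMapO x p y) (invMapO x p z) = |p| * dist y z / (dist y x * dist z x) := by
  simp only [dist_eq_norm]
  exact norm_invMapO_sub_invMapO x p hy hz

lemma invMapO_ne_center (x : E) {p : ℝ} (hp : p ≠ 0) {y : E} (hy : y ≠ x) :
    invMapO x p y ≠ x := by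
  have hu : ‖y - x‖ ≠ 0 := by simpa [sub_eq_zero] using hy
  intro h
  have h2 := norm_invMapO_sub_center x p hy
  rw [h, sub_self, norm_zero] at h2
  exact div_ne_zero (abs_ne_zero.mpr hp) hu h2.symm

lemma invMapO_invol (x : E) {p : ℝ} (hp : p ≠ 0) {y : E} (hy : y ≠ x) :
    invMapO x p (invMapO x p y) = y := by
  have hu : ‖y - x‖ ≠ 0 := by simpa [sub_eq_zero] using hy
  have h1 : invMapO x p (invMapO x p y)
      = x + (p / ‖invMapO x p y - x‖ ^ 2) • ((p / ‖y - x‖ ^ 2) • (y - x)) := by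
    rw [invMapO, invMapO_sub_center]
  rw [h1, norm_invMapO_sub_center x p hy, smul_smul]
  have : p / (|p| / ‖y - x‖) ^ 2 * (p / ‖y - x‖ ^ 2) = 1 := by
    rw [div_pow, sq_abs]
    have hp2 : p ^ 2 ≠ 0 := pow_ne_zero 2 hp
    field_simp
  rw [this, one_smul]
  abel

lemma invMapO_injOn (x : E) {p : ℝ} (hp : p ≠ 0) :
    InjOn (invMapO x p) {x}ᶜ := by
  intro y hy z hz h
  have hy' : y ≠ x := hy
  have hz' : z ≠ x := hz
  rw [← invMapO_invol x hp hy', ← invMapO_invol x hp hz', h]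

lemma measurable_invMapO [MeasurableSpace E] [BorelSpace E] [SecondCountableTopology E]
    (x : E) (p : ℝ) : Measurable (invMapO x p) := by
  apply Measurable.add measurable_const
  exact Measurable.smul
    (Measurable.div measurable_const (((measurable_id.sub_const x).norm).pow_const 2))
    (measurable_id.sub_const x)

/-- The signed inversion with power `p = ‖x‖² - R²` maps the sphere of radius `R` to itself. -/
lemma invMapO_mem_sphere {R : ℝ} (hR : 0 < R) {x : E} (hx : ‖x‖ ≠ R) {y : E}
    (hy : ‖y‖ = R) : ‖invMapO x (‖x‖ ^ 2 - R ^ 2) y‖ = R := by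
  have hyx : y ≠ x := by intro h; exact hx (by rw [← h, hy])
  have hu : ‖y - x‖ ≠ 0 := by simpa [sub_eq_zero] using hyx
  have hnu : ‖y - x‖ ^ 2 = R ^ 2 - 2 * inner ℝ y x + ‖x‖ ^ 2 := by
    rw [@norm_sub_sq_real, hy]
  refine eq_of_sq_eq' (norm_nonneg _) hR.le ?_
  rw [invMapO]
  rw [@norm_add_sq_real, real_inner_smul_right, norm_smul]
  rw [Real.norm_eq_abs, abs_div, abs_pow, abs_norm]
  have hinner : inner ℝ x (y - x) = (inner ℝ y x : ℝ) - ‖x‖ ^ 2 := by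
    rw [inner_sub_right, real_inner_self_eq_norm_sq, real_inner_comm]
  rw [hinner]
  rw [mul_pow, div_pow, sq_abs]
  have h2 : ‖y - x‖ ^ 2 ≠ 0 := pow_ne_zero 2 hu
  field_simp
  rw [hnu]
  ring



open scoped ENNReal NNReal

variable [MeasurableSpace E] [BorelSpace E] [SecondCountableTopology E]

/-- Lipschitz upper bound for the Hausdorff measure of an inverted set. -/
lemma lip_bound (x : E) (p : ℝ) {c : ℝ} (hc : 0 < c) {B : Set E}
    (hB : ∀ y ∈ B, c ≤ dist y x) (k : ℕ) :
    μH[(k:ℝ)] (invMapO x p '' B) ≤ ENNReal.ofReal (|p| / c ^ 2) ^ k * μH[(k:ℝ)] B := by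
  have hlip : LipschitzOnWith (Real.toNNReal (|p| / c ^ 2)) (invMapO x p) B := by
    apply LipschitzOnWith.of_dist_le_mul
    intro y hy z hz
    have hyc : c ≤ dist y x := hB y hy
    have hzc : c ≤ dist z x := hB z hz
    have hy0 : (0:ℝ) < dist y x := lt_of_lt_of_le hc hyc
    have hz0 : (0:ℝ) < dist z x := lt_of_lt_of_le hc hzc
    have hyx : y ≠ x := dist_pos.mp hy0
    have hzx : z ≠ x := dist_pos.mp hz0
    rw [dist_invMapO x p hyx hzx, Real.coe_toNNReal _ (by positivity)]
    have h1 : |p| * dist y z / (dist y x * dist z x) ≤ |p| * dist y z / (c * c) := by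
      gcongr
    calc |p| * dist y z / (dist y x * dist z x) ≤ |p| * dist y z / (c * c) := h1
      _ = |p| / c ^ 2 * dist y z := by ring
  have := hlip.hausdorffMeasure_image_le (show (0:ℝ) ≤ (k:ℝ) by positivity)
  rwa [ENNReal.rpow_natCast] at this

/-- For `C ⊆ S`, the image of `C` under the sphere inversion is `Φ⁻¹ C ∩ S`. -/
lemma image_invMapO_of_subset_sphere {R : ℝ} (hR : 0 < R) {x : E} (hx : ‖x‖ ≠ R)
    {C : Set E} (hC : C ⊆ sphere (0:E) R) :
    invMapO x (‖x‖ ^ 2 - R ^ 2) '' C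
      = invMapO x (‖x‖ ^ 2 - R ^ 2) ⁻¹' C ∩ sphere (0:E) R := by
  have hp : (‖x‖ ^ 2 - R ^ 2) ≠ 0 :=
    sub_ne_zero.mpr fun h => hx (eq_of_sq_eq' (norm_nonneg _) hR.le h)
  set p := ‖x‖ ^ 2 - R ^ 2 with hpdef
  have hSx : ∀ y ∈ sphere (0:E) R, y ≠ x := by
    intro y hy h
    exact hx (by rw [← h]; exact mem_sphere_zero_iff_norm.mp hy)
  ext z
  constructor
  · rintro ⟨y, hy, rfl⟩
    have hyS := hC hy
    have hyx : y ≠ x := hSx y hyS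
    have hzS : invMapO x p y ∈ sphere (0:E) R :=
      mem_sphere_zero_iff_norm.mpr (invMapO_mem_sphere hR hx (mem_sphere_zero_iff_norm.mp hyS))
    refine ⟨?_, hzS⟩
    show invMapO x p (invMapO x p y) ∈ C
    rw [invMapO_invol x hp hyx]; exact hy
  · rintro ⟨hzC, hzS⟩
    have hzx : z ≠ x := hSx z hzS
    exact ⟨invMapO x p z, hzC, invMapO_invol x hp hzx⟩

/-- Two-sided comparison between `μH (Φ '' B)` and `∫⁻_B ω^k`, with ratio `r^{2k}`. -/
lemma key_measure_bound (k : ℕ) {R : ℝ} (hR : 0 < R) {x : E} (hx : ‖x‖ ≠ R)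
    {B : Set E} (hBm : MeasurableSet B) (hBS : B ⊆ sphere (0:E) R)
    {r : ℝ} (hr : 1 < r) :
    μH[(k:ℝ)] (invMapO x (‖x‖ ^ 2 - R ^ 2) '' B)
        ≤ ENNReal.ofReal (r ^ 2) ^ k *
          ∫⁻ y in B, ENNReal.ofReal (|‖x‖ ^ 2 - R ^ 2| / dist y x ^ 2) ^ k ∂μH[(k:ℝ)] ∧
      (∫⁻ y in B, ENNReal.ofReal (|‖x‖ ^ 2 - R ^ 2| / dist y x ^ 2) ^ k ∂μH[(k:ℝ)])
        ≤ ENNReal.ofReal (r ^ 2) ^ k * μH[(k:ℝ)] (invMapO x (‖x‖ ^ 2 - R ^ 2) '' B) := by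
  set p := ‖x‖ ^ 2 - R ^ 2 with hpdef
  have hp : p ≠ 0 := sub_ne_zero.mpr fun h => hx (eq_of_sq_eq' (norm_nonneg _) hR.le h)
  have hP : 0 < |p| := abs_pos.mpr hp
  set m : ℝ := |R - ‖x‖| with hmdef
  have hm : 0 < m := abs_pos.mpr (sub_ne_zero.mpr (Ne.symm hx))
  have hr0 : (0:ℝ) < r := lt_trans one_pos hr
  have hmS : ∀ y ∈ sphere (0:E) R, m ≤ dist y x := by
    intro y hy
    have h1 : |‖y‖ - ‖x‖| ≤ ‖y - x‖ := abs_norm_sub_norm_le y x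
    rw [mem_sphere_zero_iff_norm.mp hy] at h1
    rwa [dist_eq_norm]
  set Φ : E → E := invMapO x p with hΦdef
  set μ : Measure E := μH[(k:ℝ)] with hμdef
  set dens : E → ℝ≥0∞ := fun y => ENNReal.ofReal (|p| / dist y x ^ 2) ^ k with hdens
  have hdens_meas : Measurable dens := by
    apply Measurable.pow_const
    exact ENNReal.measurable_ofReal.comp
      (measurable_const.div ((measurable_id.dist measurable_const).pow_const 2))
  set t : ℕ → ℝ := fun i => m * r ^ i with ht
  have htpos : ∀ i, 0 < t i := fun i => mul_pos hm (pow_pos hr0 i)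
  have htsucc : ∀ i, t (i + 1) = r * t i := by
    intro i; simp only [ht, pow_succ]; ring
  have htmono : Monotone t := fun i j h =>
    mul_le_mul_of_nonneg_left (pow_le_pow_right₀ hr.le h) hm.le
  set A : ℕ → Set E := fun i => B ∩ {y | t i ≤ dist y x ∧ dist y x < t (i + 1)} with hA
  have hdistm : Measurable fun y : E => dist y x := measurable_id.dist measurable_const
  have hAm : ∀ i, MeasurableSet (A i) := fun i =>
    hBm.inter ((measurableSet_le measurable_const hdistm).inter
      (measurableSet_lt hdistm measurable_const))
  have hAsub : ∀ i, A i ⊆ B := fun i => inter_subset_left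
  have hAx : ∀ i, ∀ y ∈ A i, y ≠ x := by
    intro i y hy
    exact dist_pos.mp (lt_of_lt_of_le (htpos i) hy.2.1)
  have hBeq : B = ⋃ i, A i := by
    apply subset_antisymm _ (iUnion_subset fun i => hAsub i)
    intro y hy
    have hdm : m ≤ dist y x := hmS y (hBS hy)
    have hex : ∃ i, dist y x < t (i + 1) := by
      obtain ⟨n, hn⟩ := pow_unbounded_of_one_lt (dist y x / m) hr
      refine ⟨n, ?_⟩
      have h1 : dist y x < m * r ^ n := by
        rw [div_lt_iff₀ hm] at hn; linarith [hn]
      exact lt_of_lt_of_le h1 (htmono (Nat.le_succ n))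
    have h1 : dist y x < t (Nat.find hex + 1) := Nat.find_spec hex
    have h2 : t (Nat.find hex) ≤ dist y x := by
      rcases Nat.eq_zero_or_pos (Nat.find hex) with h0 | h0
      · rw [h0]; simpa [ht] using hdm
      · have hmin := Nat.find_min hex (Nat.sub_lt h0 one_pos)
        push_neg at hmin
        rwa [show Nat.find hex - 1 + 1 = Nat.find hex from Nat.sub_add_cancel h0] at hmin
    exact mem_iUnion.mpr ⟨Nat.find hex, hy, h2, h1⟩
  have hdisj : Pairwise (Function.onFun Disjoint A) := by
    intro i j hij
    apply Set.disjoint_left.mpr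
    intro y hyi hyj
    rcases lt_or_gt_of_ne hij with h | h
    · have : t (i + 1) ≤ t j := htmono h
      have := hyi.2.2; have := hyj.2.1; linarith
    · have : t (j + 1) ≤ t i := htmono h
      have := hyj.2.2; have := hyi.2.1; linarith
  have hIm_meas : ∀ i, MeasurableSet (Φ '' A i) := by
    intro i
    rw [hΦdef, image_invMapO_of_subset_sphere hR hx ((hAsub i).trans hBS)]
    exact ((measurable_invMapO x p) (hAm i)).inter isClosed_sphere.measurableSet
  have hIm_disj : Pairwise (Function.onFun Disjoint fun i => Φ '' A i) := by
    intro i j hij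
    have h1 := (hdisj hij).preimage Φ
    simp only [Function.onFun]
    rw [hΦdef, image_invMapO_of_subset_sphere hR hx ((hAsub i).trans hBS),
      image_invMapO_of_subset_sphere hR hx ((hAsub j).trans hBS)]
    exact h1.mono inter_subset_left inter_subset_left
  -- per-slab bounds
  have slab : ∀ i, μ (Φ '' A i) ≤ ENNReal.ofReal (r ^ 2) ^ k * ∫⁻ y in A i, dens y ∂μ ∧
      (∫⁻ y in A i, dens y ∂μ) ≤ ENNReal.ofReal (r ^ 2) ^ k * μ (Φ '' A i) := by
    intro i
    have hc : 0 < t i := htpos i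
    have hrc : 0 < r * t i := mul_pos hr0 hc
    have hAbound : ∀ y ∈ A i, t i ≤ dist y x ∧ dist y x ≤ r * t i := by
      intro y hy
      exact ⟨hy.2.1, by rw [← htsucc i]; exact hy.2.2.le⟩
    have ha := lip_bound x p hc (fun y hy => (hAbound y hy).1) k
    have hzge : ∀ z ∈ Φ '' A i, |p| / (r * t i) ≤ dist z x := by
      rintro z ⟨y, hy, rfl⟩
      have hyx : y ≠ x := hAx i y hy
      rw [hΦdef, dist_invMapO_center x p hyx]
      exact div_le_div_of_nonneg_left hP.le
        (lt_of_lt_of_le hc (hAbound y hy).1) (hAbound y hy).2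
    have hb' := lip_bound x p (c := |p| / (r * t i)) (by positivity) hzge k
    have hinvol : Φ '' (Φ '' A i) = A i := by
      rw [← image_comp]
      have heq : EqOn (Φ ∘ Φ) id (A i) := fun y hy => invMapO_invol x hp (hAx i y hy)
      rw [image_congr heq, image_id]
    rw [hinvol] at hb'
    have hPne : |p| ≠ 0 := ne_of_gt hP
    have hrtne : r * t i ≠ 0 := ne_of_gt hrc
    have hconst : |p| / (|p| / (r * t i)) ^ 2 = (r * t i) ^ 2 / |p| := by
      rw [div_pow, div_div_eq_mul_div, pow_two |p|]
      exact mul_div_mul_left _ _ hPne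
    rw [hconst] at hb'
    have hdens_ub : (∫⁻ y in A i, dens y ∂μ) ≤ ENNReal.ofReal (|p| / t i ^ 2) ^ k * μ (A i) := by
      rw [← setLIntegral_const (A i) _]
      apply setLIntegral_mono' (hAm i)
      intro y hy
      apply pow_le_pow_left'
      apply ENNReal.ofReal_le_ofReal
      have := (hAbound y hy).1
      gcongr
    have hdens_lb : ENNReal.ofReal (|p| / (r * t i) ^ 2) ^ k * μ (A i)
        ≤ ∫⁻ y in A i, dens y ∂μ := by
      rw [← setLIntegral_const (A i) _]
      apply setLIntegral_mono hdens_meas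
      intro y hy
      apply pow_le_pow_left'
      apply ENNReal.ofReal_le_ofReal
      have h1 := (hAbound y hy).2
      have h2 : 0 < dist y x := lt_of_lt_of_le hc (hAbound y hy).1
      gcongr
    have hU : ENNReal.ofReal (|p| / t i ^ 2)
        = ENNReal.ofReal (r ^ 2) * ENNReal.ofReal (|p| / (r * t i) ^ 2) := by
      rw [← ENNReal.ofReal_mul (by positivity)]
      congr 1
      field_simp
    have hone : ENNReal.ofReal (|p| / (r * t i) ^ 2) * ENNReal.ofReal ((r * t i) ^ 2 / |p|)
        = 1 := by
      rw [← ENNReal.ofReal_mul (by positivity)]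
      rw [show |p| / (r * t i) ^ 2 * ((r * t i) ^ 2 / |p|) = 1 from by field_simp]
      exact ENNReal.ofReal_one
    constructor
    · calc μ (Φ '' A i) ≤ ENNReal.ofReal (|p| / t i ^ 2) ^ k * μ (A i) := ha
        _ = ENNReal.ofReal (r ^ 2) ^ k * (ENNReal.ofReal (|p| / (r * t i) ^ 2) ^ k * μ (A i)) := by
            rw [hU, mul_pow, mul_assoc]
        _ ≤ ENNReal.ofReal (r ^ 2) ^ k * ∫⁻ y in A i, dens y ∂μ :=
            mul_le_mul_right hdens_lb _
    · calc (∫⁻ y in A i, dens y ∂μ) ≤ ENNReal.ofReal (|p| / t i ^ 2) ^ k * μ (A i) := hdens_ub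
        _ = ENNReal.ofReal (r ^ 2) ^ k * (ENNReal.ofReal (|p| / (r * t i) ^ 2) ^ k * μ (A i)) := by
            rw [hU, mul_pow, mul_assoc]
        _ ≤ ENNReal.ofReal (r ^ 2) ^ k * (ENNReal.ofReal (|p| / (r * t i) ^ 2) ^ k *
              (ENNReal.ofReal ((r * t i) ^ 2 / |p|) ^ k * μ (Φ '' A i))) := by
            exact mul_le_mul_right (mul_le_mul_right hb' _) _
        _ = ENNReal.ofReal (r ^ 2) ^ k * μ (Φ '' A i) := by
            rw [← mul_assoc (ENNReal.ofReal (|p| / (r * t i) ^ 2) ^ k), ← mul_pow, hone,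
              one_pow, one_mul]
  have hμsum : μ (Φ '' B) = ∑' i, μ (Φ '' A i) := by
    conv_lhs => rw [hBeq]
    rw [image_iUnion]
    exact measure_iUnion hIm_disj hIm_meas
  have hIsum : (∫⁻ y in B, dens y ∂μ) = ∑' i, ∫⁻ y in A i, dens y ∂μ := by
    conv_lhs => rw [hBeq]
    exact lintegral_iUnion hAm hdisj _
  constructor
  · calc μ (Φ '' B) = ∑' i, μ (Φ '' A i) := hμsum
      _ ≤ ∑' i, ENNReal.ofReal (r ^ 2) ^ k * ∫⁻ y in A i, dens y ∂μ :=
          ENNReal.tsum_le_tsum fun i => (slab i).1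
      _ = ENNReal.ofReal (r ^ 2) ^ k * ∑' i, ∫⁻ y in A i, dens y ∂μ := ENNReal.tsum_mul_left
      _ = ENNReal.ofReal (r ^ 2) ^ k * ∫⁻ y in B, dens y ∂μ := by rw [← hIsum]
  · calc (∫⁻ y in B, dens y ∂μ) = ∑' i, ∫⁻ y in A i, dens y ∂μ := hIsum
      _ ≤ ∑' i, ENNReal.ofReal (r ^ 2) ^ k * μ (Φ '' A i) :=
          ENNReal.tsum_le_tsum fun i => (slab i).2
      _ = ENNReal.ofReal (r ^ 2) ^ k * ∑' i, μ (Φ '' A i) := ENNReal.tsum_mul_left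
      _ = ENNReal.ofReal (r ^ 2) ^ k * μ (Φ '' B) := by rw [← hμsum]

/-- Exact change of variables for `μH[k]` under the sphere inversion. -/
lemma key_measure (k : ℕ) {R : ℝ} (hR : 0 < R) {x : E} (hx : ‖x‖ ≠ R)
    {B : Set E} (hBm : MeasurableSet B) (hBS : B ⊆ sphere (0:E) R) :
    μH[(k:ℝ)] (invMapO x (‖x‖ ^ 2 - R ^ 2) '' B)
      = ∫⁻ y in B, ENNReal.ofReal (|‖x‖ ^ 2 - R ^ 2| / dist y x ^ 2) ^ k ∂μH[(k:ℝ)] := by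
  set a := μH[(k:ℝ)] (invMapO x (‖x‖ ^ 2 - R ^ 2) '' B) with haa
  set b := ∫⁻ y in B, ENNReal.ofReal (|‖x‖ ^ 2 - R ^ 2| / dist y x ^ 2) ^ k ∂μH[(k:ℝ)] with hbb
  have hbd : ∀ r : ℝ, 1 < r → a ≤ ENNReal.ofReal (r ^ 2) ^ k * b ∧
      b ≤ ENNReal.ofReal (r ^ 2) ^ k * a :=
    fun r hr => key_measure_bound k hR hx hBm hBS hr
  have hC : Filter.Tendsto (fun n : ℕ => ENNReal.ofReal ((1 + 1 / ((n:ℝ) + 1)) ^ 2) ^ k)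
      Filter.atTop (nhds 1) := by
    have h1 : Filter.Tendsto (fun n : ℕ => 1 + 1 / ((n:ℝ) + 1)) Filter.atTop (nhds 1) := by
      have := tendsto_one_div_add_atTop_nhds_zero_nat (𝕜 := ℝ)
      simpa using (tendsto_const_nhds (x := (1:ℝ))).add this
    have h2 : Filter.Tendsto (fun n : ℕ => (1 + 1 / ((n:ℝ) + 1)) ^ 2) Filter.atTop (nhds 1) := by
      simpa using h1.pow 2
    have h3 := (ENNReal.continuous_ofReal.tendsto _).comp h2
    simp only [ENNReal.ofReal_one] at h3
    have h4 := ((ENNReal.continuous_pow k).tendsto _).comp h3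
    simpa [Function.comp_def] using h4
  have hrn : ∀ n : ℕ, (1:ℝ) < 1 + 1 / ((n:ℝ) + 1) := by
    intro n
    have : (0:ℝ) < 1 / ((n:ℝ) + 1) := by positivity
    linarith
  apply le_antisymm
  · have hlim : Filter.Tendsto
        (fun n : ℕ => ENNReal.ofReal ((1 + 1 / ((n:ℝ) + 1)) ^ 2) ^ k * b)
        Filter.atTop (nhds b) := by
      simpa using ENNReal.Tendsto.mul_const hC (Or.inl one_ne_zero)
    exact ge_of_tendsto' hlim fun n => (hbd _ (hrn n)).1
  · have hlim : Filter.Tendsto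
        (fun n : ℕ => ENNReal.ofReal ((1 + 1 / ((n:ℝ) + 1)) ^ 2) ^ k * a)
        Filter.atTop (nhds a) := by
      simpa using ENNReal.Tendsto.mul_const hC (Or.inl one_ne_zero)
    exact ge_of_tendsto' hlim fun n => (hbd _ (hrn n)).2



/-- The pushforward of the restricted Hausdorff measure under the sphere inversion is
the measure with density `ω^k`. -/
lemma map_invMapO (k : ℕ) {R : ℝ} (hR : 0 < R) {x : E} (hx : ‖x‖ ≠ R) :
    Measure.map (invMapO x (‖x‖ ^ 2 - R ^ 2)) (μH[(k:ℝ)].restrict (sphere (0:E) R))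
      = (μH[(k:ℝ)].restrict (sphere (0:E) R)).withDensity
          (fun y => ((Real.toNNReal (|‖x‖ ^ 2 - R ^ 2| / dist y x ^ 2) ^ k : ℝ≥0) : ℝ≥0∞)) := by
  set p := ‖x‖ ^ 2 - R ^ 2 with hpdef
  have hp : p ≠ 0 := sub_ne_zero.mpr fun h => hx (eq_of_sq_eq' (norm_nonneg _) hR.le h)
  have hSx : ∀ y ∈ sphere (0:E) R, y ≠ x := by
    intro y hy h
    exact hx (by rw [← h]; exact mem_sphere_zero_iff_norm.mp hy)
  ext A hA
  rw [Measure.map_apply (measurable_invMapO x p) hA,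
    Measure.restrict_apply ((measurable_invMapO x p) hA)]
  have hset : invMapO x p ⁻¹' A ∩ sphere (0:E) R = invMapO x p '' (A ∩ sphere (0:E) R) := by
    rw [image_invMapO_of_subset_sphere hR hx inter_subset_right]
    ext z
    constructor
    · rintro ⟨hzA, hzS⟩
      exact ⟨⟨hzA, mem_sphere_zero_iff_norm.mpr
        (invMapO_mem_sphere hR hx (mem_sphere_zero_iff_norm.mp hzS))⟩, hzS⟩
    · rintro ⟨⟨hzA, _⟩, hzS⟩
      exact ⟨hzA, hzS⟩
  rw [hset, key_measure k hR hx (hA.inter isClosed_sphere.measurableSet) inter_subset_right,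
    withDensity_apply _ hA, Measure.restrict_restrict hA]
  apply lintegral_congr
  intro y
  rw [ENNReal.coe_pow]
  rfl

end

open scoped ENNReal NNReal


/-- Statement (A) of the One Radius Theorem for `ω`.
Let `S^k` be the Euclidean sphere of radius `R > 0` about the origin in `ℝ^{k+1}`
(`k ≥ 1`), with its surface measure (the `k`-dimensional Hausdorff measure), and let
`x` satisfy `|x| ≠ R`.  With `ω(x,y) = ||x|² − |y|²| / |x − y|²`, if `α + β = k` then
`∫_{S^k} ω(x,y)^α dS_y = ∫_{S^k} ω(x,y)^β dS_y`. -/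
theorem omega_sphere_integral_eq_of_add_eq
    (k : ℕ) (hk : 1 ≤ k) (R : ℝ) (hR : 0 < R)
    (x : EuclideanSpace ℝ (Fin (k + 1))) (hx : ‖x‖ ≠ R)
    (α β : ℂ) (hαβ : α + β = (k : ℂ)) :
    ∫ y in Metric.sphere (0 : EuclideanSpace ℝ (Fin (k + 1))) R,
        ((|‖x‖ ^ 2 - ‖y‖ ^ 2| / ‖x - y‖ ^ 2 : ℝ) : ℂ) ^ α ∂μH[(k : ℝ)] =
      ∫ y in Metric.sphere (0 : EuclideanSpace ℝ (Fin (k + 1))) R,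
        ((|‖x‖ ^ 2 - ‖y‖ ^ 2| / ‖x - y‖ ^ 2 : ℝ) : ℂ) ^ β ∂μH[(k : ℝ)] := by
  set S : Set (EuclideanSpace ℝ (Fin (k + 1))) :=
    Metric.sphere (0 : EuclideanSpace ℝ (Fin (k + 1))) R with hS
  have hSm : MeasurableSet S := isClosed_sphere.measurableSet
  set p : ℝ := ‖x‖ ^ 2 - R ^ 2 with hpdef
  have hp : p ≠ 0 := sub_ne_zero.mpr fun h => hx (eq_of_sq_eq' (norm_nonneg _) hR.le h)
  have hP : 0 < |p| := abs_pos.mpr hp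
  have hPne : |p| ≠ 0 := ne_of_gt hP
  set w : EuclideanSpace ℝ (Fin (k + 1)) → ℝ := fun z => |p| / dist z x ^ 2 with hw
  set g : EuclideanSpace ℝ (Fin (k + 1)) → ℂ := fun z => Complex.exp ((Real.log (w z) : ℂ) * (-α)) with hg
  have hw_meas : Measurable w :=
    measurable_const.div ((measurable_id.dist measurable_const).pow_const 2)
  have hg_meas : Measurable g :=
    Complex.measurable_exp.comp
      ((Complex.measurable_ofReal.comp (Real.measurable_log.comp hw_meas)).mul_const (-α))
  have hSx : ∀ y ∈ S, y ≠ x := by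
    intro y hy h
    exact hx (by rw [← h]; exact mem_sphere_zero_iff_norm.mp hy)
  have hwpos : ∀ y ∈ S, 0 < w y :=
    fun y hy => div_pos hP (pow_pos (dist_pos.mpr (hSx y hy)) 2)
  have hΦS : ∀ y ∈ S, invMapO x p y ∈ S := fun y hy =>
    mem_sphere_zero_iff_norm.mpr (invMapO_mem_sphere hR hx (mem_sphere_zero_iff_norm.mp hy))
  have hwΦ : ∀ y ∈ S, w (invMapO x p y) = (w y)⁻¹ := by
    intro y hy
    have h1 : w (invMapO x p y) = |p| / (|p| / dist y x) ^ 2 := by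
      rw [hw]
      simp only
      rw [dist_invMapO_center x p (hSx y hy)]
    rw [h1, div_pow, div_div_eq_mul_div, pow_two |p|, mul_div_mul_left _ _ hPne, hw]
    simp only
    rw [inv_div]
  have hpt : ∀ γ : ℂ, ∀ y ∈ S, ((|‖x‖ ^ 2 - ‖y‖ ^ 2| / ‖x - y‖ ^ 2 : ℝ) : ℂ) ^ γ
      = Complex.exp ((Real.log (w y) : ℂ) * γ) := by
    intro γ y hy
    have hyR : ‖y‖ = R := mem_sphere_zero_iff_norm.mp hy
    have h1 : (|‖x‖ ^ 2 - ‖y‖ ^ 2| / ‖x - y‖ ^ 2 : ℝ) = w y := by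
      rw [hyR, hw]
      simp only
      rw [hpdef, dist_eq_norm, norm_sub_rev]
    rw [h1]
    have hw0 : (w y : ℂ) ≠ 0 := Complex.ofReal_ne_zero.mpr (ne_of_gt (hwpos y hy))
    rw [Complex.cpow_def_of_ne_zero hw0, Complex.ofReal_log (hwpos y hy).le]
  have step1 : ∫ y in S, ((|‖x‖ ^ 2 - ‖y‖ ^ 2| / ‖x - y‖ ^ 2 : ℝ) : ℂ) ^ α ∂μH[(k : ℝ)]
      = ∫ y in S, g (invMapO x p y) ∂μH[(k : ℝ)] := by
    apply setIntegral_congr_fun hSm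
    intro y hy
    dsimp only
    rw [hpt α y hy, hg]
    simp only
    rw [hwΦ y hy, Real.log_inv]
    congr 1
    push_cast
    ring
  have step2 : ∫ y in S, g (invMapO x p y) ∂μH[(k : ℝ)]
      = ∫ z, g z ∂(Measure.map (invMapO x p) (μH[(k : ℝ)].restrict S)) :=
    (integral_map (measurable_invMapO x p).aemeasurable hg_meas.aestronglyMeasurable).symm
  have step3 : ∫ z, g z ∂(Measure.map (invMapO x p) (μH[(k : ℝ)].restrict S))
      = ∫ z, (Real.toNNReal (w z) ^ k : ℝ≥0) • g z ∂(μH[(k : ℝ)].restrict S) := by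
    rw [hpdef] at *
    rw [map_invMapO k hR hx]
    exact integral_withDensity_eq_integral_smul
      ((measurable_real_toNNReal.comp hw_meas).pow_const k) g
  have step4 : ∫ z in S, (Real.toNNReal (w z) ^ k : ℝ≥0) • g z ∂μH[(k : ℝ)]
      = ∫ y in S, ((|‖x‖ ^ 2 - ‖y‖ ^ 2| / ‖x - y‖ ^ 2 : ℝ) : ℂ) ^ β ∂μH[(k : ℝ)] := by
    apply setIntegral_congr_fun hSm
    intro y hy
    dsimp only
    rw [hpt β y hy]
    have hwy := hwpos y hy
    rw [NNReal.smul_def, NNReal.coe_pow, Real.coe_toNNReal _ hwy.le]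
    have h2 : (w y ^ k : ℝ) = Real.exp ((k : ℝ) * Real.log (w y)) := by
      rw [← Real.log_pow, Real.exp_log (pow_pos hwy k)]
    rw [h2]
    have h3 : (Real.exp ((k : ℝ) * Real.log (w y)) : ℝ) • g y
        = Complex.exp (((k : ℝ) * Real.log (w y) : ℝ) : ℂ) * g y := by
      rw [← Complex.ofReal_exp, Complex.real_smul]
    rw [h3, hg]
    simp only
    rw [← Complex.exp_add]
    congr 1
    push_cast
    linear_combination (-(Real.log (w y) : ℂ)) * hαβ
  calc ∫ y in S, ((|‖x‖ ^ 2 - ‖y‖ ^ 2| / ‖x - y‖ ^ 2 : ℝ) : ℂ) ^ α ∂μH[(k : ℝ)]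
      = ∫ y in S, g (invMapO x p y) ∂μH[(k : ℝ)] := step1
    _ = ∫ z, g z ∂(Measure.map (invMapO x p) (μH[(k : ℝ)].restrict S)) := step2
    _ = ∫ z, (Real.toNNReal (w z) ^ k : ℝ≥0) • g z ∂(μH[(k : ℝ)].restrict S) := step3
    _ = ∫ y in S, ((|‖x‖ ^ 2 - ‖y‖ ^ 2| / ‖x - y‖ ^ 2 : ℝ) : ℂ) ^ β ∂μH[(k : ℝ)] := step4
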